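/- Let K be a complete valued field, A a K-Banach algebra of countable type which is a projective limit A = lim_k A_k of K-Banach algebras along continuous ring maps, and let M = lim_k M_k be a projective limit of finite free modules M_k over a fixed commutative Banach K-algebra O, where each transition map λ_k : M_{k+1} → M_k is O-linear with dense image and each M_k is free of the same finite rank n over O, with O-finite free modules carrying their canonical Banach topology in which every O-submodule that is finitely generated is closed. Then each λ_k is surjective, hence an isomorphism of O-modules, and therefore M is a free O-module of rank n. -/

import Mathlib

section Aux

variable {O : Type*} [CommRing O] [Nontrivial O]

/-- Surjective linear map between finite free modules of equal finrank is bijective. -/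
theorem bij_of_surj_of_finrank_eq {A B : Type*} [AddCommGroup A] [Module O A]
    [AddCommGroup B] [Module O B] [Module.Free O A] [Module.Finite O A]
    [Module.Free O B] [Module.Finite O B]
    (h : Module.finrank O A = Module.finrank O B)
    (f : A →ₗ[O] B) (hf : Function.Surjective f) : Function.Bijective f := by
  refine ⟨?_, hf⟩
  -- transport to an endomorphism of B
  let e : A ≃ₗ[O] B := (Module.finBasis O A).reindex (finCongr h) |>.equiv (Module.finBasis O B)
      (Equiv.refl _)
  let g : B →ₗ[O] B := f.comp e.symm.toLinearMap
  have hg : Function.Surjective g := hf.comp e.symm.surjective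
  have hginj : Function.Injective g :=
    (OrzechProperty.injective_of_surjective_endomorphism g hg)
  have : f = g.comp e.toLinearMap := by
    ext x; simp [g]
  rw [this]
  exact hginj.comp e.injective

end Aux

/-- Let `O` be a commutative noetherian topological (Banach) algebra in which every
finitely generated submodule of a topological `O`-module under consideration is
closed, and let `M = lim M_k` be a projective limit of free `O`-modules of the same
finite rank `n` along `O`-linear transition maps with dense image. Then each
transition map is surjective, hence bijective, and the limit is a free `O`-module of
rank `n`. -/
theorem limit_free_of_dense_transition_maps
    (O : Type*) [CommRing O] [IsNoetherianRing O] [Nontrivial O]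
    (n : ℕ)
    (M : ℕ → Type*) [∀ k, AddCommGroup (M k)] [∀ k, Module O (M k)]
    [∀ k, TopologicalSpace (M k)]
    [∀ k, Module.Free O (M k)] [∀ k, Module.Finite O (M k)]
    (hrank : ∀ k, Module.finrank O (M k) = n)
    (lam : ∀ k : ℕ, M (k + 1) →ₗ[O] M k)
    (hdense : ∀ k, DenseRange (lam k))
    (hclosed : ∀ (k : ℕ) (N : Submodule O (M k)), N.FG → IsClosed (N : Set (M k))) :
    (∀ k, Function.Surjective (lam k)) ∧
    (∀ k, Function.Bijective (lam k)) ∧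
    Module.Free O
      ↥(⨅ k : ℕ, LinearMap.ker
        ((lam k).comp (LinearMap.proj (k + 1)) - LinearMap.proj k)) ∧
    Module.finrank O
      ↥(⨅ k : ℕ, LinearMap.ker
        ((lam k).comp (LinearMap.proj (k + 1)) - LinearMap.proj k)) = n := by
  -- Step 1: each transition map is surjective.
  have hsurj : ∀ k, Function.Surjective (lam k) := by
    intro k
    have hFG : (LinearMap.range (lam k)).FG :=
      IsNoetherian.noetherian _
    have hcl : IsClosed ((LinearMap.range (lam k) : Submodule O (M k)) : Set (M k)) :=
      hclosed k _ hFG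
    have hd : Dense ((LinearMap.range (lam k) : Submodule O (M k)) : Set (M k)) := by
      simpa [LinearMap.coe_range, DenseRange] using hdense k
    have : ((LinearMap.range (lam k) : Submodule O (M k)) : Set (M k)) = Set.univ := by
      rw [← hcl.closure_eq]; exact hd.closure_eq
    intro x
    have : x ∈ LinearMap.range (lam k) := by rw [← SetLike.mem_coe, this]; trivial
    exact this
  -- Step 2: bijectivity.
  have hbij : ∀ k, Function.Bijective (lam k) := fun k =>
    bij_of_surj_of_finrank_eq (by rw [hrank, hrank]) (lam k) (hsurj k)
  refine ⟨hsurj, hbij, ?_⟩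
  -- the limit submodule
  set L := ⨅ k : ℕ, LinearMap.ker
      ((lam k).comp (LinearMap.proj (k + 1) : (∀ j, M j) →ₗ[O] M (k + 1))
        - LinearMap.proj k) with hL
  have hmem : ∀ x : ∀ j, M j, x ∈ L ↔ ∀ k, lam k (x (k + 1)) = x k := by
    intro x
    simp [hL, Submodule.mem_iInf, LinearMap.mem_ker, sub_eq_zero]
  -- the linear equivs
  let e : ∀ k, M (k + 1) ≃ₗ[O] M k := fun k => LinearEquiv.ofBijective (lam k) (hbij k)
  -- iterated sections
  let iter : ∀ k, M 0 →ₗ[O] M k := fun k =>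
    Nat.rec LinearMap.id (fun k f => (e k).symm.toLinearMap.comp f) k
  have hiter : ∀ k (m : M 0), lam k (iter (k + 1) m) = iter k m := by
    intro k m
    show lam k ((e k).symm (iter k m)) = iter k m
    exact (e k).apply_symm_apply (iter k m)
  -- section as a linear map into L
  let s : M 0 →ₗ[O] L :=
    { toFun := fun m => ⟨fun k => iter k m, (hmem _).2 (fun k => hiter k m)⟩
      map_add' := fun a b => by ext k; simp
      map_smul' := fun c a => by ext k; simp }
  -- projection
  let p : L →ₗ[O] M 0 := (LinearMap.proj 0).comp L.subtype
  have hps : ∀ m, p (s m) = m := fun m => rfl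
  have hsp : ∀ x : L, s (p x) = x := by
    rintro ⟨x, hx⟩
    rw [hmem] at hx
    ext k
    show iter k (x 0) = x k
    induction k with
    | zero => rfl
    | succ k ih =>
      show (e k).symm (iter k (x 0)) = x (k + 1)
      rw [ih]
      apply (e k).injective
      rw [(e k).apply_symm_apply]
      exact (hx k).symm
  let E : L ≃ₗ[O] M 0 := LinearEquiv.ofLinear p s (by ext m; exact hps m)
    (LinearMap.ext fun x => hsp x)
  constructor
  · exact Module.Free.of_equiv E.symm
  · rw [E.finrank_eq, hrank]
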